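/- Let (X,d) be a metric space and γ a Borel probability measure on X that is positive on every nonempty open set. Suppose there exists a Borel set C ⊆ X with γ(C) > 0 such that for γ-almost every x, the ratio γ(C ∩ B^cl(x,r))/γ(B^cl(x,r)) tends to 0 as r → 0. Then for every p with 1 ≤ p < ∞, the operator norms of the averaging operators are not uniformly bounded: sup_{r>0} ‖A_r‖_{L^p(γ)→L^p(γ)} = ∞. -/

import Mathlib

open MeasureTheory Metric Filter Topology ENNReal

/-- The averaging operator `A_r f(x) = (1/γ(B^cl(x,r))) ∫_{B^cl(x,r)} f dγ`
over closed balls. -/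
noncomputable def avgOp {X : Type*} [MetricSpace X] [MeasurableSpace X]
    (μ : Measure X) (r : ℝ) (f : X → ℝ) (x : X) : ℝ :=
  (μ (closedBall x r)).toReal⁻¹ * ∫ y in closedBall x r, f y ∂μ

lemma iInter_closedBall {X : Type*} [MetricSpace X] (x : X) (r : ℝ) :
    ⋂ n : ℕ, closedBall x (r + 1 / (n + 1)) = closedBall x r := by
  ext y
  simp only [Set.mem_iInter, mem_closedBall]
  constructor
  · intro h
    refine le_of_forall_pos_le_add fun ε hε => ?_
    obtain ⟨n, hn⟩ := exists_nat_one_div_lt hε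
    exact (h n).trans (by linarith)
  · intro h n
    have : (0:ℝ) < 1 / (n + 1) := by positivity
    linarith

lemma measurable_measure_closedBall' {X : Type*} [MetricSpace X] [MeasurableSpace X]
    [BorelSpace X] (μ : Measure X) [IsFiniteMeasure μ] (r : ℝ) :
    Measurable (fun x => μ (closedBall x r)) := by
  apply measurable_of_Iio
  intro a
  apply IsOpen.measurableSet
  rw [Metric.isOpen_iff]
  intro x hx
  simp only [Set.mem_preimage, Set.mem_Iio] at hx ⊢
  have htend : Tendsto (fun n : ℕ => μ (closedBall x (r + 1 / (n + 1)))) atTop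
      (𝓝 (μ (closedBall x r))) := by
    have := MeasureTheory.tendsto_measure_iInter_atTop
      (μ := μ) (s := fun n : ℕ => closedBall x (r + 1 / (n + 1)))
      (fun n => (measurableSet_closedBall).nullMeasurableSet)
      (fun m n hmn => closedBall_subset_closedBall (by
        have h1 : (m:ℝ) ≤ n := Nat.cast_le.2 hmn
        have : (1:ℝ) / (n + 1) ≤ 1 / (m + 1) := by
          apply one_div_le_one_div_of_le <;> linarith
        linarith))
      ⟨0, measure_ne_top μ _⟩
    rwa [iInter_closedBall] at this
  obtain ⟨n, hn⟩ := (htend.eventually_lt_const hx).exists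
  have hδ : (0:ℝ) < 1 / (n + 1) := by positivity
  refine ⟨1 / (n + 1), hδ, fun x' hx' => ?_⟩
  simp only [Set.mem_preimage, Set.mem_Iio]
  refine lt_of_le_of_lt (measure_mono ?_) hn
  intro y hy
  simp only [mem_closedBall] at *
  rw [mem_ball] at hx'
  calc dist y x ≤ dist y x' + dist x' x := dist_triangle _ _ _
    _ ≤ r + 1 / (n + 1) := by linarith

lemma measurable_setIntegral_closedBall {X : Type*} [MetricSpace X] [MeasurableSpace X]
    [BorelSpace X] (γ : Measure X) [IsFiniteMeasure γ] (r : ℝ) {f : X → ℝ}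
    (hfm : Measurable f) (hfi : Integrable f γ) :
    Measurable (fun x => ∫ y in closedBall x r, f y ∂γ) := by
  have hfin1 : ∫⁻ y, ENNReal.ofReal (f y) ∂γ ≠ ⊤ := by
    refine ne_top_of_le_ne_top hfi.2.ne (lintegral_mono fun y => ?_)
    rw [Real.enorm_eq_ofReal_abs]
    exact ENNReal.ofReal_le_ofReal (le_abs_self _)
  have hfin2 : ∫⁻ y, ENNReal.ofReal (-(f y)) ∂γ ≠ ⊤ := by
    refine ne_top_of_le_ne_top hfi.2.ne (lintegral_mono fun y => ?_)
    rw [Real.enorm_eq_ofReal_abs]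
    exact ENNReal.ofReal_le_ofReal (neg_le_abs _)
  have h1 : IsFiniteMeasure (γ.withDensity fun y => ENNReal.ofReal (f y)) :=
    isFiniteMeasure_withDensity hfin1
  have h2 : IsFiniteMeasure (γ.withDensity fun y => ENNReal.ofReal (-(f y))) :=
    isFiniteMeasure_withDensity hfin2
  have heq : (fun x => ∫ y in closedBall x r, f y ∂γ) = fun x =>
      ((γ.withDensity fun y => ENNReal.ofReal (f y)) (closedBall x r)).toReal -
      ((γ.withDensity fun y => ENNReal.ofReal (-(f y))) (closedBall x r)).toReal := by
    funext x
    rw [integral_eq_lintegral_pos_part_sub_lintegral_neg_part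
      (hfi.restrict (s := closedBall x r)),
      withDensity_apply _ measurableSet_closedBall,
      withDensity_apply _ measurableSet_closedBall]
  rw [heq]
  exact ((measurable_measure_closedBall' _ r).ennreal_toReal).sub
    ((measurable_measure_closedBall' _ r).ennreal_toReal)

lemma measurable_avgOp {X : Type*} [MetricSpace X] [MeasurableSpace X]
    [BorelSpace X] (γ : Measure X) [IsFiniteMeasure γ] (r : ℝ) {f : X → ℝ}
    (hfm : Measurable f) (hfi : Integrable f γ) :
    Measurable (avgOp γ r f) :=
  ((measurable_measure_closedBall' γ r).ennreal_toReal.inv).mul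
    (measurable_setIntegral_closedBall γ r hfm hfi)

section
variable {X : Type*} [MetricSpace X] [MeasurableSpace X] [BorelSpace X]
    (γ : Measure X) [IsProbabilityMeasure γ]
    (hpos : ∀ U : Set X, IsOpen U → U.Nonempty → 0 < γ U)

omit [BorelSpace X] in
include hpos in
lemma cb_pos {r : ℝ} (hr : 0 < r) (x : X) : 0 < (γ (closedBall x r)).toReal := by
  have h1 : 0 < γ (closedBall x r) :=
    lt_of_lt_of_le (hpos (ball x r) isOpen_ball ⟨x, mem_ball_self hr⟩)
      (measure_mono ball_subset_closedBall)
  exact ENNReal.toReal_pos h1.ne' (measure_ne_top γ _)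

include hpos in
lemma abs_avgOp_le {r : ℝ} (hr : 0 < r) {f : X → ℝ} (hfi : Integrable f γ)
    {x : X} {M : ℝ} (hb : ∀ y ∈ closedBall x r, |f y| ≤ M) :
    |avgOp γ r f x| ≤ M := by
  have ht := cb_pos γ hpos hr x
  have hM : 0 ≤ M := le_trans (abs_nonneg _) (hb x (mem_closedBall_self hr.le))
  have hint : ‖∫ y in closedBall x r, f y ∂γ‖ ≤ M * (γ (closedBall x r)).toReal :=
    norm_setIntegral_le_of_norm_le_const (measure_lt_top γ _)
      (fun y hy => by rw [Real.norm_eq_abs]; exact hb y hy)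
  rw [avgOp, abs_mul, abs_inv, abs_of_nonneg ENNReal.toReal_nonneg]
  rw [Real.norm_eq_abs] at hint
  calc (γ (closedBall x r)).toReal⁻¹ * |∫ y in closedBall x r, f y ∂γ|
      ≤ (γ (closedBall x r)).toReal⁻¹ * (M * (γ (closedBall x r)).toReal) := by
        apply mul_le_mul_of_nonneg_left hint (by positivity)
    _ = M := by field_simp

omit [BorelSpace X] [IsProbabilityMeasure γ] in
lemma avgOp_sub {r : ℝ} {f g : X → ℝ} (hfi : Integrable f γ)
    (hgi : Integrable g γ) (x : X) :
    avgOp γ r (fun y => f y - g y) x = avgOp γ r f x - avgOp γ r g x := by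
  rw [avgOp, integral_sub (hfi.restrict (s := closedBall x r))
    (hgi.restrict (s := closedBall x r)), mul_sub]; rfl

omit [BorelSpace X] in
include hpos in
lemma avgOp_sub_const {r : ℝ} (hr : 0 < r) {f : X → ℝ} (hfi : Integrable f γ)
    (a : ℝ) (x : X) :
    avgOp γ r (fun y => f y - a) x = avgOp γ r f x - a := by
  have ht := cb_pos γ hpos hr x
  rw [avgOp, integral_sub (hfi.restrict (s := closedBall x r)) (integrable_const a),
    mul_sub, setIntegral_const, smul_eq_mul]
  rw [avgOp]
  congr 1
  field_simp
  rfl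

include hpos in
lemma tendsto_avgOp_boundedCont (g : BoundedContinuousFunction X ℝ) (x : X) :
    Tendsto (fun n : ℕ => g x - avgOp γ (1 / (n + 1)) (⇑g) x) atTop (𝓝 0) := by
  rw [Metric.tendsto_atTop]
  intro ε hε
  obtain ⟨δ, hδ, hδ'⟩ := Metric.continuousAt_iff.1 g.continuous.continuousAt (ε / 2)
    (half_pos hε)
  obtain ⟨N, hN⟩ := exists_nat_one_div_lt hδ
  refine ⟨N, fun n hn => ?_⟩
  have hrn : (0:ℝ) < 1 / (n + 1) := by positivity
  have hrle : (1:ℝ) / (n + 1) ≤ 1 / (N + 1) := by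
    have h1 : (N:ℝ) ≤ n := Nat.cast_le.2 hn
    apply one_div_le_one_div_of_le <;> linarith
  have hb : ∀ y ∈ closedBall x (1 / (n + 1)), |g y - g x| ≤ ε / 2 := by
    intro y hy
    rw [mem_closedBall] at hy
    have : dist y x < δ := lt_of_le_of_lt hy (lt_of_le_of_lt hrle hN)
    have := hδ' this
    rw [Real.dist_eq] at this
    exact this.le
  have key : |avgOp γ (1 / (n + 1)) (fun y => g y - g x) x| ≤ ε / 2 :=
    abs_avgOp_le γ hpos hrn ((g.integrable γ).sub (integrable_const _)) hb
  rw [avgOp_sub_const γ hpos hrn (g.integrable γ)] at key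
  rw [Real.dist_0_eq_abs, abs_sub_comm]
  exact lt_of_le_of_lt key (half_lt_self hε)

end

lemma eLpNorm_tendsto_zero {X : Type*} [MeasurableSpace X] (γ : Measure X)
    [IsFiniteMeasure γ] {p : ℝ≥0∞} (hp0 : p ≠ 0) (hptop : p ≠ ⊤)
    {F : ℕ → X → ℝ} (hFm : ∀ n, Measurable (F n)) {M : ℝ}
    (hFb : ∀ n x, |F n x| ≤ M)
    (hFlim : ∀ᵐ x ∂γ, Tendsto (fun n => F n x) atTop (𝓝 0)) :
    Tendsto (fun n => eLpNorm (F n) p γ) atTop (𝓝 0) := by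
  have hpt : 0 < p.toReal := ENNReal.toReal_pos hp0 hptop
  have hlint : Tendsto (fun n => ∫⁻ x, ‖F n x‖₊ ^ p.toReal ∂γ) atTop (𝓝 0) := by
    have h0 : (0 : ℝ≥0∞) = ∫⁻ _, 0 ∂γ := by simp
    rw [h0]
    apply tendsto_lintegral_of_dominated_convergence (fun _ => ENNReal.ofReal M ^ p.toReal)
    · exact fun n => ((hFm n).nnnorm.coe_nnreal_ennreal.pow_const _)
    · intro n
      filter_upwards with x
      apply ENNReal.rpow_le_rpow _ hpt.le
      rw [← enorm_eq_nnnorm, Real.enorm_eq_ofReal_abs]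
      exact ENNReal.ofReal_le_ofReal (hFb n x)
    · simp [lintegral_const]
      exact ENNReal.mul_ne_top (ENNReal.rpow_ne_top_of_nonneg hpt.le ofReal_ne_top)
        (measure_ne_top γ _)
    · filter_upwards [hFlim] with x hx
      have h1 : Tendsto (fun n => (‖F n x‖₊ : ℝ≥0∞)) atTop (𝓝 0) := by
        have := hx.norm
        simp only [norm_zero] at this
        exact ENNReal.tendsto_ofReal this |>.congr (fun n => by
          rw [ofReal_norm, enorm_eq_nnnorm]) |>.mono_right (by simp)
      have := (ENNReal.continuous_rpow_const (y := p.toReal)).continuousAt.tendsto.comp h1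
      simpa [Function.comp_def, ENNReal.zero_rpow_of_pos hpt] using this
  have : Tendsto (fun n => (∫⁻ x, ‖F n x‖₊ ^ p.toReal ∂γ) ^ (1 / p.toReal)) atTop (𝓝 0) := by
    have := (ENNReal.continuous_rpow_const (y := 1 / p.toReal)).continuousAt.tendsto.comp hlint
    simpa [Function.comp_def, one_div, ENNReal.zero_rpow_of_pos (show (0:ℝ) < p.toReal⁻¹ by positivity)] using this
  refine this.congr fun n => ?_
  rw [eLpNorm_eq_lintegral_rpow_enorm_toReal hp0 hptop]
  rfl

/-- If `γ` is a Borel probability measure, positive on nonempty open sets, and there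
is a Borel set `C` with `γ(C) > 0` such that `γ(C ∩ B^cl(x,r))/γ(B^cl(x,r)) → 0` as
`r → 0` for `γ`-a.e. `x`, then for every `1 ≤ p < ∞` the averaging operators are not
uniformly bounded on `L^p(γ)`: no finite constant bounds all of them, i.e.
`sup_{r>0} ‖A_r‖_{L^p→L^p} = ∞`. -/
theorem stmt16 {X : Type*} [MetricSpace X] [MeasurableSpace X] [BorelSpace X]
    (γ : Measure X) [IsProbabilityMeasure γ]
    (hpos : ∀ U : Set X, IsOpen U → U.Nonempty → 0 < γ U)
    (C : Set X) (hCmeas : MeasurableSet C) (hCpos : 0 < γ C)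
    (hlim : ∀ᵐ x ∂γ, Tendsto
      (fun r : ℝ => γ (C ∩ closedBall x r) / γ (closedBall x r))
      (𝓝[>] (0 : ℝ)) (𝓝 0)) :
    ∀ p : ℝ≥0∞, 1 ≤ p → p ≠ ⊤ →
      ∀ c : ℝ≥0∞, c ≠ ⊤ →
        ∃ r : ℝ, 0 < r ∧ ∃ f : X → ℝ, MemLp f p γ ∧
          c * eLpNorm f p γ < eLpNorm (avgOp γ r f) p γ := by
  intro p hp1 hptop c hctop
  by_contra hcon
  push_neg at hcon
  have hp0 : p ≠ 0 := (zero_lt_one.trans_le hp1).ne'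
  have hpt : 0 < p.toReal := ENNReal.toReal_pos hp0 hptop
  set f₀ : X → ℝ := C.indicator fun _ => (1:ℝ) with hf₀
  have hf₀m : Measurable f₀ := measurable_const.indicator hCmeas
  have hf₀i : Integrable f₀ γ := (integrable_const (1:ℝ)).indicator hCmeas
  have hf₀mem : MemLp f₀ p γ := memLp_indicator_const p hCmeas 1 (Or.inr (measure_ne_top γ C))
  have hf₀b : ∀ y, |f₀ y| ≤ 1 := by
    intro y
    by_cases hy : y ∈ C <;> simp [hf₀, Set.indicator, hy]
  set rs : ℕ → ℝ := fun n => 1 / (n + 1) with hrs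
  have hrspos : ∀ n, 0 < rs n := fun n => by positivity
  -- identity for the average of the indicator
  have hid : ∀ (r : ℝ), 0 < r → ∀ x, avgOp γ r f₀ x =
      (γ (C ∩ closedBall x r) / γ (closedBall x r)).toReal := by
    intro r hr x
    rw [avgOp, hf₀, integral_indicator hCmeas, setIntegral_const, smul_eq_mul, mul_one,
      measureReal_def, Measure.restrict_apply hCmeas, ENNReal.toReal_div, div_eq_mul_inv, mul_comm]
  -- rs tends to 0 within Ioi
  have hrs0 : Tendsto rs atTop (𝓝[>] (0:ℝ)) :=
    tendsto_nhdsWithin_of_tendsto_nhds_of_eventually_within _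
      tendsto_one_div_add_atTop_nhds_zero_nat
      (Eventually.of_forall fun n => hrspos n)
  -- T2 : averages of f₀ tend to 0 in L^p
  have T2 : Tendsto (fun n => eLpNorm (avgOp γ (rs n) f₀) p γ) atTop (𝓝 0) := by
    apply eLpNorm_tendsto_zero γ hp0 hptop
      (fun n => measurable_avgOp γ (rs n) hf₀m hf₀i) (M := 1)
    · intro n x
      exact abs_avgOp_le γ hpos (hrspos n) hf₀i (fun y _ => hf₀b y)
    · filter_upwards [hlim] with x hx
      have h1 : Tendsto (fun n => γ (C ∩ closedBall x (rs n)) / γ (closedBall x (rs n)))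
          atTop (𝓝 0) := hx.comp hrs0
      have h2 := (ENNReal.tendsto_toReal (by simp)).comp h1
      simp only [ENNReal.toReal_zero] at h2
      refine h2.congr fun n => ?_
      exact (hid (rs n) (hrspos n) x).symm
  -- T1 : f₀ - A f₀ tends to 0 in L^p
  have T1 : Tendsto (fun n => eLpNorm (fun x => f₀ x - avgOp γ (rs n) f₀ x) p γ)
      atTop (𝓝 0) := by
    rw [ENNReal.tendsto_nhds_zero]
    intro ε hε
    set ε' : ℝ≥0∞ := ε / 2 / (c + 1) with hε'def
    have hε2 : (0:ℝ≥0∞) < ε / 2 := ENNReal.div_pos hε.ne' ofNat_ne_top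
    have hε' : ε' ≠ 0 := by
      rw [hε'def]
      exact (ENNReal.div_pos hε2.ne' (by simp [hctop])).ne'
    obtain ⟨g, hg, hgmem⟩ := hf₀mem.exists_boundedContinuous_eLpNorm_sub_le hptop hε'
    have hgi : Integrable (⇑g) γ := g.integrable γ
    have hgm : Measurable (⇑g) := g.continuous.measurable
    have Tg : Tendsto (fun n => eLpNorm (fun x => g x - avgOp γ (rs n) (⇑g) x) p γ)
        atTop (𝓝 0) := by
      apply eLpNorm_tendsto_zero γ hp0 hptop
        (fun n => hgm.sub (measurable_avgOp γ (rs n) hgm hgi)) (M := 2 * ‖g‖)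
      · intro n x
        have h1 : |g x| ≤ ‖g‖ := by
          have := g.norm_coe_le_norm x
          rwa [Real.norm_eq_abs] at this
        have h2 : |avgOp γ (rs n) (⇑g) x| ≤ ‖g‖ := by
          apply abs_avgOp_le γ hpos (hrspos n) hgi
          intro y _
          have := g.norm_coe_le_norm y
          rwa [Real.norm_eq_abs] at this
        calc |g x - avgOp γ (rs n) (⇑g) x| ≤ |g x| + |avgOp γ (rs n) (⇑g) x| :=
              abs_sub _ _
          _ ≤ 2 * ‖g‖ := by linarith
      · exact Eventually.of_forall fun x => tendsto_avgOp_boundedCont γ hpos g x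
    have hTg := (ENNReal.tendsto_nhds_zero.1 Tg) (ε / 2) hε2
    filter_upwards [hTg] with n hn
    -- decompose
    have hdecomp : (fun x => f₀ x - avgOp γ (rs n) f₀ x) =
        fun x => (f₀ x - g x) + ((g x - avgOp γ (rs n) (⇑g) x) +
          avgOp γ (rs n) (fun y => g y - f₀ y) x) := by
      funext x
      rw [avgOp_sub γ hgi hf₀i]
      ring
    have hmA : Measurable (avgOp γ (rs n) fun y => g y - f₀ y) :=
      measurable_avgOp γ (rs n) (hgm.sub hf₀m) (hgi.sub hf₀i)
    have hmB : Measurable (fun x => g x - avgOp γ (rs n) (⇑g) x) :=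
      hgm.sub (measurable_avgOp γ (rs n) hgm hgi)
    have step1 : eLpNorm (fun x => f₀ x - avgOp γ (rs n) f₀ x) p γ ≤
        eLpNorm (fun x => f₀ x - g x) p γ +
        (eLpNorm (fun x => g x - avgOp γ (rs n) (⇑g) x) p γ +
         eLpNorm (avgOp γ (rs n) fun y => g y - f₀ y) p γ) := by
      rw [hdecomp]
      calc eLpNorm (fun x => (f₀ x - g x) + ((g x - avgOp γ (rs n) (⇑g) x) +
            avgOp γ (rs n) (fun y => g y - f₀ y) x)) p γ
          ≤ eLpNorm (fun x => f₀ x - g x) p γ +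
            eLpNorm (fun x => (g x - avgOp γ (rs n) (⇑g) x) +
              avgOp γ (rs n) (fun y => g y - f₀ y) x) p γ :=
            eLpNorm_add_le ((hf₀m.sub hgm).aestronglyMeasurable)
              ((hmB.add hmA).aestronglyMeasurable) hp1
        _ ≤ _ := by
            gcongr
            exact eLpNorm_add_le hmB.aestronglyMeasurable hmA.aestronglyMeasurable hp1
    have hbound : eLpNorm (avgOp γ (rs n) fun y => g y - f₀ y) p γ ≤ c * ε' := by
      have := hcon (rs n) (hrspos n) (fun y => g y - f₀ y) (hgmem.sub hf₀mem)
      refine this.trans ?_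
      gcongr
      have : (fun y => g y - f₀ y) = -(f₀ - ⇑g) := by funext y; simp [Pi.sub_apply]
      rw [this, eLpNorm_neg]
      exact hg
    have hfg : eLpNorm (fun x => f₀ x - g x) p γ ≤ ε' := hg
    calc eLpNorm (fun x => f₀ x - avgOp γ (rs n) f₀ x) p γ
        ≤ ε' + (ε / 2 + c * ε') := by
          refine step1.trans ?_
          gcongr
        _ = (c + 1) * ε' + ε / 2 := by ring
        _ ≤ ε / 2 + ε / 2 := by
          gcongr
          exact ENNReal.mul_div_le
        _ = ε := ENNReal.add_halves ε
  -- conclude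
  have htri : ∀ n, eLpNorm f₀ p γ ≤
      eLpNorm (fun x => f₀ x - avgOp γ (rs n) f₀ x) p γ +
      eLpNorm (avgOp γ (rs n) f₀) p γ := by
    intro n
    have : f₀ = fun x => (f₀ x - avgOp γ (rs n) f₀ x) + avgOp γ (rs n) f₀ x := by
      funext x; ring
    nth_rewrite 1 [this]
    exact eLpNorm_add_le ((hf₀m.sub (measurable_avgOp γ (rs n) hf₀m hf₀i)).aestronglyMeasurable)
      ((measurable_avgOp γ (rs n) hf₀m hf₀i).aestronglyMeasurable) hp1
  have hE : eLpNorm f₀ p γ ≤ 0 := by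
    have := T1.add T2
    rw [add_zero] at this
    exact ge_of_tendsto' this htri
  have hE0 : eLpNorm f₀ p γ = 0 := le_antisymm hE zero_le
  rw [hf₀, eLpNorm_indicator_const hCmeas hp0 hptop] at hE0
  simp only [enorm_one, nnnorm_one, ENNReal.coe_one, one_mul] at hE0
  rw [ENNReal.rpow_eq_zero_iff] at hE0
  rcases hE0 with ⟨h, _⟩ | ⟨_, h⟩
  · exact hCpos.ne' h
  · have : (0:ℝ) < 1 / p.toReal := by positivity
    linarith
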